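/- Let $\{G \twoheadrightarrow G_i\}_{i \in I}$ be a finite separated collection of connected algebraic groups over a field (i.e., the induced morphism $G \to \prod_{i \in I} G_i$ is injective and each $G \to G_i$ is surjective). Suppose each $G_i$ is simple (nonabelian with no nontrivial connected normal subgroup). Then there is a partition $I = \bigsqcup_{h \in H} I_h$ and for each $h$ a subgroup $G^h \subseteq \prod_{i \in I_h} G_i$ which is an iso-graph over $\{G_i\}_{i \in I_h}$ (each projection $G^h \to G_i$ is an isomorphism), such that $G = \prod_{h \in H} G^h$ inside $\prod_{i \in I} G_i$. -/

import Mathlib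

universe u v

section Aux

variable {ι : Type u} {G : ι → Type v} [∀ i, Group (G i)]

/-- `relAux H i j` : the `i`-coordinate of elements of `H` controls the `j`-coordinate. -/
def relAux (H : Subgroup (∀ i, G i)) (i j : ι) : Prop :=
  ∀ g : ∀ i, G i, g ∈ H → g i = 1 → g j = 1

def setoidAux (H : Subgroup (∀ i, G i)) : Setoid ι where
  r i j := relAux H i j ∧ relAux H j i
  iseqv := ⟨fun _ => ⟨fun _ _ h => h, fun _ _ h => h⟩,
    fun h => ⟨h.2, h.1⟩,
    fun h1 h2 => ⟨fun g hg h => h2.1 g hg (h1.1 g hg h),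
      fun g hg h => h1.2 g hg (h2.2 g hg h)⟩⟩

/-- The projection to coordinate `i` of the subgroup of `H` of elements vanishing on `S`. -/
def PP (H : Subgroup (∀ i, G i)) (S : Set ι) (i : ι) : Subgroup (G i) :=
  Subgroup.map (Pi.evalMonoidHom G i) (H ⊓ Subgroup.pi S fun _ => ⊥)

lemma mem_PP {H : Subgroup (∀ i, G i)} {S : Set ι} {i : ι} {a : G i} :
    a ∈ PP H S i ↔ ∃ g, g ∈ H ∧ (∀ j ∈ S, g j = 1) ∧ g i = a := by
  constructor
  · rintro ⟨g, ⟨hgH, hgS⟩, rfl⟩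
    exact ⟨g, hgH, fun j hj => Subgroup.mem_bot.mp ((Subgroup.mem_pi S).mp hgS j hj), rfl⟩
  · rintro ⟨g, hgH, hgS, rfl⟩
    exact ⟨g, ⟨hgH, (Subgroup.mem_pi S).mpr fun j hj => Subgroup.mem_bot.mpr (hgS j hj)⟩, rfl⟩

/-- The monoid hom restricting a tuple to the coordinates in the fiber of `k` under `f`. -/
def restrHom {κ : Type*} (G : ι → Type v) [∀ i, Group (G i)] (f : ι → κ) (k : κ) :
    (∀ i, G i) →* (∀ i : {i // f i = k}, G i.1) where
  toFun g i := g i.1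
  map_one' := rfl
  map_mul' _ _ := rfl

variable {H : Subgroup (∀ i, G i)}
variable (hsurj : ∀ i, Function.Surjective fun g : H => (g : ∀ j, G j) i)

include hsurj

lemma PP_normal (S : Set ι) (i : ι) : (PP H S i).Normal := by
  constructor
  intro x hx a
  rw [mem_PP] at hx ⊢
  obtain ⟨g, hgH, hgS, hgi⟩ := hx
  obtain ⟨⟨h, hhH⟩, hh⟩ := hsurj i a
  refine ⟨h * g * h⁻¹, mul_mem (mul_mem hhH hgH) (inv_mem hhH), fun j hj => ?_, ?_⟩
  · simp [hgS j hj]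
  · simp only at hh
    simp only [Pi.mul_apply, Pi.inv_apply]
    rw [hgi, hh]

lemma PP_eq_bot_or_top (S : Set ι) (i : ι) [IsSimpleGroup (G i)] :
    PP H S i = ⊥ ∨ PP H S i = ⊤ :=
  (PP_normal hsurj S i).eq_bot_or_eq_top

variable [∀ i, IsSimpleGroup (G i)]

lemma relAux_symm {i j : ι} (h : relAux H i j) : relAux H j i := by
  rcases PP_eq_bot_or_top hsurj {j} i with hb | ht
  · intro g hg hgj
    have hm : g i ∈ PP H {j} i := mem_PP.mpr ⟨g, hg, by simpa using hgj, rfl⟩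
    rw [hb] at hm; exact Subgroup.mem_bot.mp hm
  · exfalso
    obtain ⟨b, hb1⟩ := exists_ne (1 : G j)
    obtain ⟨⟨h', hh'⟩, hh'j⟩ := hsurj j b
    simp only at hh'j
    have hm : h' i ∈ PP H {j} i := ht ▸ Subgroup.mem_top _
    obtain ⟨g, hgH, hgj, hgi⟩ := mem_PP.mp hm
    have key : (g⁻¹ * h') i = 1 := by simp [hgi]
    have hj1 := h _ (mul_mem (inv_mem hgH) hh') key
    apply hb1
    have hgj1 : g j = 1 := hgj j rfl
    simp only [Pi.mul_apply, Pi.inv_apply, hgj1, inv_one, one_mul] at hj1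
    rw [← hh'j, hj1]

open Classical in
lemma trunc_mem [Finite ι] (hnonab : ∀ i, ∃ a b : G i, a * b ≠ b * a)
    {h : ∀ i, G i} (hh : h ∈ H) (i₀ : ι) :
    (fun j => if relAux H j i₀ then h j else 1) ∈ H := by
  cases nonempty_fintype ι
  have key : ∀ S : Finset ι, (∀ j ∈ S, ¬ relAux H j i₀) → PP H ↑S i₀ = ⊤ := by
    intro S
    induction S using Finset.induction_on with
    | empty =>
      intro _
      rw [eq_top_iff]
      intro a _
      obtain ⟨⟨g, hg⟩, hgi⟩ := hsurj i₀ a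
      exact mem_PP.mpr ⟨g, hg, by simp, hgi⟩
    | @insert j S hjS ih =>
      intro hins
      have hS : PP H ↑S i₀ = ⊤ := ih fun x hx => hins x (Finset.mem_insert_of_mem hx)
      have hj' : ¬ relAux H j i₀ := hins j (Finset.mem_insert_self _ _)
      have hjtop : PP H {j} i₀ = ⊤ := by
        rcases PP_eq_bot_or_top hsurj {j} i₀ with hb | ht
        · exfalso
          apply hj'
          intro g hg hgj
          have hm : g i₀ ∈ PP H {j} i₀ := mem_PP.mpr ⟨g, hg, by simpa using hgj, rfl⟩
          rw [hb] at hm; exact Subgroup.mem_bot.mp hm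
        · exact ht
      rcases PP_eq_bot_or_top hsurj (↑(insert j S)) i₀ with hb | ht
      · exfalso
        obtain ⟨a, b, hab⟩ := hnonab i₀
        have ha : a ∈ PP H ↑S i₀ := hS ▸ Subgroup.mem_top _
        have hbb : b ∈ PP H {j} i₀ := hjtop ▸ Subgroup.mem_top _
        obtain ⟨g, hgH, hgS, hgi⟩ := mem_PP.mp ha
        obtain ⟨g', hg'H, hg'j, hg'i⟩ := mem_PP.mp hbb
        have hcomH : g * g' * g⁻¹ * g'⁻¹ ∈ H :=
          mul_mem (mul_mem (mul_mem hgH hg'H) (inv_mem hgH)) (inv_mem hg'H)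
        have hmem : (g * g' * g⁻¹ * g'⁻¹) i₀ ∈ PP H (↑(insert j S)) i₀ := by
          refine mem_PP.mpr ⟨_, hcomH, ?_, rfl⟩
          intro x hx
          rw [Finset.coe_insert, Set.mem_insert_iff] at hx
          rcases hx with rfl | hx
          · have : g' x = 1 := hg'j x rfl
            simp [this]
          · have : g x = 1 := hgS x hx
            simp [this]
        rw [hb] at hmem
        have h1 := Subgroup.mem_bot.mp hmem
        simp only [Pi.mul_apply, Pi.inv_apply, hgi, hg'i] at h1
        apply hab
        have h2 : a * b * a⁻¹ = b := mul_inv_eq_one.mp h1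
        exact mul_inv_eq_iff_eq_mul.mp h2
      · exact ht
  set S : Finset ι := Finset.univ.filter fun j => ¬ relAux H j i₀ with hSdef
  have hStop := key S (by intro j hj; simpa [hSdef] using hj)
  have hm : h i₀ ∈ PP H ↑S i₀ := hStop ▸ Subgroup.mem_top _
  obtain ⟨g, hgH, hgS, hgi⟩ := mem_PP.mp hm
  have heq : (fun j => if relAux H j i₀ then h j else 1) = g := by
    funext j
    by_cases hr : relAux H j i₀
    · simp only [hr, if_true]
      have hr' := relAux_symm hsurj hr
      have hx : (g * h⁻¹) i₀ = 1 := by simp [hgi]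
      have hj1 := hr' _ (mul_mem hgH (inv_mem hh)) hx
      simp only [Pi.mul_apply, Pi.inv_apply] at hj1
      exact (mul_inv_eq_one.mp hj1).symm
    · simp only [hr, if_false]
      exact (hgS j (by simp [hSdef, hr])).symm
  rw [heq]; exact hgH

end Aux

/-- Goursat-type lemma: if `H` is a subgroup of a finite product of simple nonabelian
groups `G i` such that each projection `H → G i` is surjective (a separated collection of
surjections), then there is a partition of the index set and, for each part, an iso-graph
`Gh k` over the factors in that part, such that `H` is the product of the `Gh k`. -/
theorem stmt_3 {ι : Type u} [Finite ι] (G : ι → Type v) [∀ i, Group (G i)]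
    [∀ i, IsSimpleGroup (G i)]
    (hnonab : ∀ i, ∃ a b : G i, a * b ≠ b * a)
    (H : Subgroup (∀ i, G i))
    (hsurj : ∀ i, Function.Surjective fun g : H => (g : ∀ j, G j) i) :
    ∃ (κ : Type u) (f : ι → κ), Function.Surjective f ∧
      ∃ Gh : (k : κ) → Subgroup (∀ i : {i // f i = k}, G i.1),
        (∀ (k : κ) (i : {i // f i = k}),
          Function.Bijective fun g : Gh k => (g : ∀ j : {j // f j = k}, G j.1) i) ∧
        ∀ g : ∀ i, G i, g ∈ H ↔ ∀ k : κ, (fun i : {i // f i = k} => g i.1) ∈ Gh k := by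
  classical
  cases nonempty_fintype ι
  refine ⟨Quotient (setoidAux H), Quotient.mk _, fun k => Quotient.exists_rep k,
    fun k => Subgroup.map (restrHom G (Quotient.mk _) k) H, ?_, ?_⟩
  · intro k i
    constructor
    · rintro ⟨x, hx⟩ ⟨y, hy⟩ hxy
      obtain ⟨g, hgH, rfl⟩ := hx
      obtain ⟨g', hg'H, rfl⟩ := hy
      simp only at hxy
      simp only [Subtype.mk.injEq]
      apply Subtype.ext
      funext j
      have hji : (setoidAux H).r j.1 i.1 := Quotient.exact (j.2.trans i.2.symm)
      have hx1 : (g * g'⁻¹) i.1 = 1 := by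
        simp only [Pi.mul_apply, Pi.inv_apply]
        rw [show g i.1 = g' i.1 from hxy, mul_inv_cancel]
      have hj1 := hji.2 _ (mul_mem hgH (inv_mem hg'H)) hx1
      simp only [Pi.mul_apply, Pi.inv_apply] at hj1
      exact mul_inv_eq_one.mp hj1
    · intro a
      obtain ⟨⟨g, hg⟩, hgi⟩ := hsurj i.1 a
      exact ⟨⟨restrHom G (Quotient.mk _) k g, ⟨g, hg, rfl⟩⟩, hgi⟩
  · intro g
    constructor
    · exact fun hg k => ⟨g, hg, rfl⟩
    · intro hall
      have main : ∀ s : Finset (Quotient (setoidAux H)),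
          (fun j => if Quotient.mk (setoidAux H) j ∈ s then g j else 1) ∈ H := by
        intro s
        induction s using Finset.induction_on with
        | empty => simp; exact one_mem H
        | @insert k s hks ih =>
          obtain ⟨h, hhH, hhr⟩ := hall k
          obtain ⟨i₀, hi₀⟩ := Quotient.exists_rep k
          have ht := trunc_mem hsurj hnonab hhH i₀
          have heq : (fun j => if Quotient.mk (setoidAux H) j ∈ insert k s then g j else 1)
              = (fun j => if relAux H j i₀ then h j else 1) *
                (fun j => if Quotient.mk (setoidAux H) j ∈ s then g j else 1) := by
            funext j
            by_cases hjk : Quotient.mk (setoidAux H) j = k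
            · have hrel : relAux H j i₀ := (Quotient.exact (hjk.trans hi₀.symm)).1
              have hjs : Quotient.mk (setoidAux H) j ∉ s := hjk ▸ hks
              have hval : h j = g j := congrFun hhr ⟨j, hjk⟩
              have hks' : k ∉ s := hks
              simp [Pi.mul_apply, hjk, hrel, hks', hval]
            · have hrel : ¬ relAux H j i₀ := fun hr =>
                hjk (((Quotient.sound (⟨hr, relAux_symm hsurj hr⟩ :
                  (setoidAux H).r j i₀)) : Quotient.mk (setoidAux H) j
                    = Quotient.mk (setoidAux H) i₀).trans hi₀)
              simp [Finset.mem_insert, hjk, hrel]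
          rw [heq]
          exact mul_mem ht ih
      have := main Finset.univ
      simpa using this
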